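/- Let V be a finite-dimensional real vector space and A ∈ End(V). Then there exist unique pairwise commuting endomorphisms A_n, A_h, A_e with A = A_n + A_h + A_e, where A_n is nilpotent, A_h is diagonalizable over ℝ, and A_e is semisimple with purely imaginary spectrum. Moreover an endomorphism B commutes with A if and only if it commutes with each of A_n, A_h, A_e. -/

import Mathlib

open Polynomial Module

namespace RJD




section General
variable {K : Type*} [Field K] {V : Type*} [AddCommGroup V] [Module K V] [FiniteDimensional K V]

/-- A root of the characteristic polynomial is an eigenvalue. -/
lemma hasEigenvalue_of_charpoly_root (f : Module.End K V) {z : K}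
    (hz : f.charpoly.IsRoot z) : f.HasEigenvalue z := by
  classical
  set b := Module.finBasis K V
  set M := LinearMap.toMatrix b b f with hM
  have hcp : M.charpoly = f.charpoly := LinearMap.charpoly_toMatrix f b
  have hdet : (z • (1 : Matrix _ _ K) - M).det = 0 := by
    have h1 : (Polynomial.evalRingHom z) M.charpoly = 0 := by
      rw [hcp]; exact hz
    rw [Matrix.charpoly, RingHom.map_det] at h1
    rw [← h1]
    congr 1
    ext i j
    by_cases h : i = j
    · subst h
      simp [Matrix.charmatrix_apply_eq, Matrix.sub_apply, Matrix.smul_apply, Matrix.one_apply]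
    · simp [Matrix.charmatrix_apply_ne _ _ _ h, Matrix.sub_apply, Matrix.smul_apply,
        Matrix.one_apply_ne h]
  obtain ⟨v, hv0, hv⟩ := Matrix.exists_mulVec_eq_zero_iff.2 hdet
  have hMv : M.mulVec v = z • v := by
    have := hv
    rw [Matrix.sub_mulVec, sub_eq_zero] at this
    rw [← this, Matrix.smul_mulVec, Matrix.one_mulVec]
  have heig : Module.End.HasEigenvalue (Matrix.toLin' M) z := by
    apply Module.End.hasEigenvalue_of_hasEigenvector (x := v)
    exact ⟨Module.End.mem_eigenspace_iff.2 (by rw [Matrix.toLin'_apply, hMv]), hv0⟩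
  have h1 : (minpoly K (Matrix.toLin' M)).IsRoot z := Module.End.hasEigenvalue_iff_isRoot.1 heig
  rw [Matrix.minpoly_toLin', hM, LinearMap.minpoly_toMatrix] at h1
  exact Module.End.hasEigenvalue_iff_isRoot.2 h1

/-- An eigenvalue is a root of any annihilating polynomial. -/
lemma isRoot_of_annihilating {f : Module.End K V} {z : K} (hf : f.HasEigenvalue z)
    {q : K[X]} (hq : Polynomial.aeval f q = 0) : q.IsRoot z := by
  obtain ⟨v, hv⟩ := hf.exists_hasEigenvector
  have h := Module.End.aeval_apply_of_hasEigenvector (p := q) hv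
  rw [hq] at h
  simp only [LinearMap.zero_apply] at h
  rcases smul_eq_zero.1 h.symm with h' | h'
  · exact h'
  · exact absurd h' hv.right



/-- Eigenvalue splitting for a sum of commuting endomorphisms over an alg. closed field. -/
lemma exists_isRoot_add_of_charpoly_root [IsAlgClosed K]
    {f g : Module.End K V} (hfg : Commute f g) {p q : K[X]}
    (hp : Polynomial.aeval f p = 0) (hq : Polynomial.aeval g q = 0)
    {z : K} (hz : (f + g).charpoly.IsRoot z) :
    ∃ μ ν : K, p.IsRoot μ ∧ q.IsRoot ν ∧ z = μ + ν := by
  have hev : (f + g).HasEigenvalue z := hasEigenvalue_of_charpoly_root _ hz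
  set E := Module.End.eigenspace (f + g) z with hE
  have hinv : ∀ x ∈ E, f x ∈ E := by
    intro x hx
    rw [hE, Module.End.mem_eigenspace_iff] at hx ⊢
    have h1 : (f + g) (f x) = f ((f + g) x) := by
      have : (f + g) * f = f * (f + g) := (Commute.refl f).add_left hfg.symm
      calc (f + g) (f x) = ((f + g) * f) x := rfl
      _ = (f * (f + g)) x := by rw [this]
      _ = f ((f + g) x) := rfl
    rw [h1, hx, map_smul]
  have hEnt : Nontrivial E := Submodule.nontrivial_iff_ne_bot.2 (Module.End.hasEigenvalue_iff.1 hev)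
  set fE := LinearMap.restrict f hinv with hfE
  obtain ⟨μ, hμ⟩ := Module.End.exists_eigenvalue fE
  obtain ⟨x, hx⟩ := hμ.exists_hasEigenvector
  have hx0 : (x : V) ≠ 0 := fun h => hx.right (Subtype.ext h)
  have hfx : f (x : V) = μ • (x : V) := by
    have := hx.apply_eq_smul
    have h2 := congrArg (Subtype.val) this
    simpa [hfE, LinearMap.restrict_apply] using h2
  have hsum : f (x : V) + g (x : V) = z • (x : V) := by
    have hmem : (x : V) ∈ E := x.2
    rw [Module.End.mem_eigenspace_iff] at hmem
    simpa using hmem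
  have hgx : g (x : V) = (z - μ) • (x : V) := by
    rw [sub_smul, ← hsum, hfx]; abel
  refine ⟨μ, z - μ, ?_, ?_, by ring⟩
  · exact isRoot_of_annihilating
      (Module.End.hasEigenvalue_of_hasEigenvector ⟨Module.End.mem_eigenspace_iff.2 hfx, hx0⟩) hp
  · exact isRoot_of_annihilating
      (Module.End.hasEigenvalue_of_hasEigenvector ⟨Module.End.mem_eigenspace_iff.2 hgx, hx0⟩) hq


end General

section Real
variable {V : Type*} [AddCommGroup V] [Module ℝ V] [FiniteDimensional ℝ V]

/-- complexified eigenvalue splitting for real endomorphisms -/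
lemma charpoly_root_sum_real {T U : Module.End ℝ V} (hTU : Commute T U) {p q : ℝ[X]}
    (hp : Polynomial.aeval T p = 0) (hq : Polynomial.aeval U q = 0) {z : ℂ}
    (hz : (((T + U).charpoly).map (algebraMap ℝ ℂ)).IsRoot z) :
    ∃ μ ν : ℂ, (p.map (algebraMap ℝ ℂ)).IsRoot μ ∧ (q.map (algebraMap ℝ ℂ)).IsRoot ν ∧
      z = μ + ν := by
  let ψ : Module.End ℝ V →ₐ[ℝ] Module.End ℂ (TensorProduct ℝ ℂ V) :=
    Module.End.baseChangeHom ℝ ℂ V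
  have hψ : ∀ T' : Module.End ℝ V, ψ T' = LinearMap.baseChange ℂ T' := fun _ => rfl
  have h1 : Commute (ψ T) (ψ U) := hTU.map ψ
  have hp' : Polynomial.aeval (ψ T) (p.map (algebraMap ℝ ℂ)) = 0 := by
    rw [aeval_map_algebraMap, Polynomial.aeval_algHom_apply, hp, map_zero]
  have hq' : Polynomial.aeval (ψ U) (q.map (algebraMap ℝ ℂ)) = 0 := by
    rw [aeval_map_algebraMap, Polynomial.aeval_algHom_apply, hq, map_zero]
  have hcp : (ψ T + ψ U).charpoly.IsRoot z := by
    rw [← map_add]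
    rw [hψ, LinearMap.charpoly_baseChange]
    exact hz
  exact exists_isRoot_add_of_charpoly_root h1 hp' hq' hcp



lemma dvd_comp_sub_comp (q u v : Polynomial ℝ) : (u - v) ∣ q.comp u - q.comp v := by
  have h := Polynomial.sub_dvd_eval_sub u v (q.map Polynomial.C)
  rw [Polynomial.eval_map, Polynomial.eval_map] at h
  exact h

lemma exists_splitting : ∀ (n : ℕ) (m : Polynomial ℝ), m.natDegree ≤ n → Squarefree m →
    m.Monic →
    ∃ h qh qe : Polynomial ℝ, qh ≠ 0 ∧ qe ≠ 0 ∧ m ∣ qh.comp h ∧ m ∣ qe.comp (X - h) ∧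
      (∀ z : ℂ, (qh.map (algebraMap ℝ ℂ)).IsRoot z → z.im = 0) ∧
      (∀ z : ℂ, (qe.map (algebraMap ℝ ℂ)).IsRoot z → z.re = 0) := by
  have hXroot : ∀ z : ℂ, ((X : Polynomial ℝ).map (algebraMap ℝ ℂ)).IsRoot z → z = 0 := by
    intro z hz
    simpa [Polynomial.IsRoot] using hz
  have base : ∀ m : Polynomial ℝ, m.natDegree = 0 → m.Monic →
      ∃ h qh qe : Polynomial ℝ, qh ≠ 0 ∧ qe ≠ 0 ∧ m ∣ qh.comp h ∧ m ∣ qe.comp (X - h) ∧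
      (∀ z : ℂ, (qh.map (algebraMap ℝ ℂ)).IsRoot z → z.im = 0) ∧
      (∀ z : ℂ, (qe.map (algebraMap ℝ ℂ)).IsRoot z → z.re = 0) := by
    intro m hdeg hmon
    have hm1 : m = 1 := by
      have := hmon.natDegree_eq_zero
      tauto
    refine ⟨0, X, X, X_ne_zero, X_ne_zero, by simp [hm1], by simp [hm1], ?_, ?_⟩
    · intro z hz; rw [hXroot z hz]; simp
    · intro z hz; rw [hXroot z hz]; simp
  intro n
  induction n with
  | zero =>
    intro m hdeg hsq hmon
    exact base m (Nat.le_zero.1 hdeg) hmon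
  | succ n ih =>
    intro m hdeg hsq hmon
    by_cases hm0 : m.natDegree = 0
    · exact base m hm0 hmon
    -- extract a monic irreducible factor p'
    have hmne : ¬ IsUnit m := by
      intro hu
      exact hm0 (Polynomial.natDegree_eq_zero_of_isUnit hu)
    obtain ⟨p, hpirr, hpdvd⟩ := WfDvdMonoid.exists_irreducible_factor hmne hsq.ne_zero
    have hpne : p ≠ 0 := hpirr.ne_zero
    have hcu : IsUnit (Polynomial.C p.leadingCoeff⁻¹) :=
      Polynomial.isUnit_C.mpr (isUnit_iff_ne_zero.2 (inv_ne_zero (leadingCoeff_ne_zero.2 hpne)))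
    set p' : Polynomial ℝ := p * Polynomial.C p.leadingCoeff⁻¹ with hp'def
    have hassoc : Associated p p' := ⟨hcu.unit, by rw [IsUnit.unit_spec]⟩
    have hp'mon : p'.Monic := Polynomial.monic_mul_leadingCoeff_inv hpne
    have hp'irr : Irreducible p' := hassoc.irreducible hpirr
    have hp'dvd : p' ∣ m := hassoc.symm.dvd.trans hpdvd
    obtain ⟨m', hm'⟩ := hp'dvd
    have hm'mon : m'.Monic := by
      have : (p' * m').Monic := hm' ▸ hmon
      exact hp'mon.of_mul_monic_left this
    have hm'sq : Squarefree m' := hsq.squarefree_of_dvd ⟨p', by rw [hm']; ring⟩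
    have hp'pos : 0 < p'.natDegree := by
      rcases Nat.eq_zero_or_pos p'.natDegree with h0 | h
      · exfalso
        have : p' = 1 := by
          have := hp'mon.natDegree_eq_zero
          tauto
        exact hp'irr.not_isUnit (this ▸ isUnit_one)
      · exact h
    have hdegs : m.natDegree = p'.natDegree + m'.natDegree := by
      rw [hm']
      exact Polynomial.natDegree_mul hp'mon.ne_zero hm'mon.ne_zero
    have hm'deg : m'.natDegree ≤ n := by omega
    obtain ⟨h', qh', qe', hqh'0, hqe'0, hdvdh', hdvde', hrooth', hroote'⟩ :=
      ih m' hm'deg hm'sq hm'mon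
    -- coprimality
    have hcop : IsCoprime p' m' := by
      rw [hp'irr.coprime_iff_not_dvd]
      intro hdvd
      have : p' * p' ∣ m := by
        rw [hm']
        exact mul_dvd_mul_left p' hdvd
      exact hp'irr.not_isUnit (hsq p' this)
    obtain ⟨aa, bb, haa⟩ := hcop
    -- the local data for p' : r and g with g.comp (X - C r) = p'
    have hdeg2 : p'.natDegree ≤ 2 := hp'irr.natDegree_le_two
    obtain ⟨r, g, hg0, hgroots, hgp'⟩ :
        ∃ (r : ℝ) (g : Polynomial ℝ), g ≠ 0 ∧
          (∀ z : ℂ, (g.map (algebraMap ℝ ℂ)).IsRoot z → z.re = 0) ∧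
          g.comp (X - Polynomial.C r) = p' := by
      rcases (by omega : p'.natDegree = 1 ∨ p'.natDegree = 2) with h1 | h2
      · -- linear case
        refine ⟨-p'.coeff 0, X, X_ne_zero, ?_, ?_⟩
        · intro z hz; rw [hXroot z hz]; simp
        · rw [X_comp, map_neg, sub_neg_eq_add, (hp'mon.eq_X_add_C h1).symm]
      · -- quadratic case
        set b := p'.coeff 1 with hbdef
        set c := p'.coeff 0 with hcdef
        have hcanon : p' = X ^ 2 + Polynomial.C b * X + Polynomial.C c := by
          have hdegp' : p'.degree = 2 := by
            rw [Polynomial.degree_eq_natDegree hp'mon.ne_zero, h2]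
            decide
          have hlt : (p' - X ^ 2).degree < 2 := by
            have := Polynomial.degree_sub_lt (p := p') (q := X ^ 2)
              (by rw [hdegp', Polynomial.degree_X_pow]; decide) hp'mon.ne_zero
              (by rw [hp'mon.leadingCoeff, Polynomial.leadingCoeff_X_pow])
            rwa [hdegp'] at this
          have hle : (p' - X ^ 2).degree ≤ 1 := by
            by_cases h0 : p' - X ^ 2 = 0
            · rw [h0]; simp
            · have h3 : (p' - X ^ 2).natDegree < 2 :=
                (Polynomial.natDegree_lt_iff_degree_lt h0).2 (by exact_mod_cast hlt)
              have h5 := Polynomial.natDegree_le_iff_degree_le.mp (by omega :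
                (p' - X ^ 2).natDegree ≤ 1)
              exact_mod_cast h5
          have hu2 := Polynomial.eq_X_add_C_of_degree_le_one hle
          have hc1 : (p' - X ^ 2).coeff 1 = b := by
            simp [Polynomial.coeff_sub, Polynomial.coeff_X_pow, hbdef]
          have hc0 : (p' - X ^ 2).coeff 0 = c := by
            simp [Polynomial.coeff_sub, Polynomial.coeff_X_pow, hcdef]
          rw [hc1, hc0] at hu2
          linear_combination hu2
        set r := -(b / 2) with hrdef
        set d := c - r ^ 2 with hddef
        have hb : b = -(2 * r) := by rw [hrdef]; ring
        have hc : c = r ^ 2 + d := by rw [hddef]; ring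
        have hd : 0 ≤ d := by
          by_contra hneg
          push_neg at hneg
          set x0 := r + Real.sqrt (-d) with hx0
          have hroot : p'.IsRoot x0 := by
            have hsq' : Real.sqrt (-d) ^ 2 = -d := Real.sq_sqrt (by linarith)
            rw [Polynomial.IsRoot, hcanon]
            simp only [Polynomial.eval_add, Polynomial.eval_mul, Polynomial.eval_pow,
              Polynomial.eval_X, Polynomial.eval_C]
            rw [hb, hc, hx0]
            nlinarith [hsq']
          obtain ⟨t, ht⟩ := Polynomial.dvd_iff_isRoot.2 hroot
          rcases hp'irr.isUnit_or_isUnit ht with hu | hu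
          · exact Polynomial.not_isUnit_X_sub_C x0 hu
          · have htne : t ≠ 0 := fun h0 => by simp [h0] at hu
            have : p'.natDegree = 1 := by
              rw [ht, Polynomial.natDegree_mul (Polynomial.X_sub_C_ne_zero x0) htne,
                Polynomial.natDegree_X_sub_C, Polynomial.natDegree_eq_zero_of_isUnit hu]
            omega
        refine ⟨r, X ^ 2 + Polynomial.C d, ?_, ?_, ?_⟩
        · exact Polynomial.X_pow_add_C_ne_zero (by norm_num) d
        · intro z hz
          have hz' : z ^ 2 + (d : ℂ) = 0 := by
            have : ((X ^ 2 + Polynomial.C d : Polynomial ℝ).map (algebraMap ℝ ℂ)) =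
                X ^ 2 + Polynomial.C (d : ℂ) := by
              simp [Polynomial.map_add, Polynomial.map_pow]
            rw [Polynomial.IsRoot, this] at hz
            simpa using hz
          have hre := congrArg Complex.re hz'
          have him := congrArg Complex.im hz'
          simp only [Complex.add_re, Complex.add_im, Complex.ofReal_re, Complex.ofReal_im,
            pow_two, Complex.mul_re, Complex.mul_im, Complex.zero_re, Complex.zero_im] at hre him
          rcases mul_eq_zero.1 (by nlinarith : z.re * z.im = 0) with h | h
          · exact h
          · nlinarith [hre, him, hd]
        · rw [hcanon]
          simp only [Polynomial.add_comp, Polynomial.pow_comp, Polynomial.X_comp,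
            Polynomial.C_comp, Polynomial.mul_comp]
          have e1 : Polynomial.C b = -(2 * Polynomial.C r) := by
            rw [hb, map_neg, map_mul, map_ofNat]
          have e2 : Polynomial.C c = Polynomial.C r ^ 2 + Polynomial.C d := by
            rw [hc, map_add, map_pow]
          rw [e1, e2]
          ring
    -- combine via CRT with h := C r * (bb * m') + h' * (aa * p')
    set h : Polynomial ℝ := Polynomial.C r * (bb * m') + h' * (aa * p') with hhdef
    have hp'h : p' ∣ h - Polynomial.C r := ⟨(h' - Polynomial.C r) * aa, by
      rw [hhdef]; linear_combination (Polynomial.C r) * haa⟩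
    have hm'h : m' ∣ h - h' := ⟨(Polynomial.C r - h') * bb, by
      rw [hhdef]; linear_combination h' * haa⟩
    refine ⟨h, qh' * (X - Polynomial.C r), qe' * g, mul_ne_zero hqh'0 (Polynomial.X_sub_C_ne_zero r),
      mul_ne_zero hqe'0 hg0, ?_, ?_, ?_, ?_⟩
    · -- m ∣ (qh' * (X - C r)).comp h
      have hm'qh : m' ∣ qh'.comp h := by
        have h1 : m' ∣ qh'.comp h - qh'.comp h' := hm'h.trans (dvd_comp_sub_comp qh' h h')
        have := dvd_add h1 hdvdh'
        simpa using this
      have heq : (qh' * (X - Polynomial.C r)).comp h = (h - Polynomial.C r) * qh'.comp h := by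
        rw [Polynomial.mul_comp, Polynomial.sub_comp, Polynomial.X_comp, Polynomial.C_comp]
        ring
      rw [heq, hm']
      exact mul_dvd_mul hp'h hm'qh
    · -- m ∣ (qe' * g).comp (X - h)
      have hm'qe : m' ∣ qe'.comp (X - h) := by
        have hsub : m' ∣ (X - h) - (X - h') := by
          have : (X - h) - (X - h') = -(h - h') := by ring
          rw [this]
          exact hm'h.neg_right
        have h1 : m' ∣ qe'.comp (X - h) - qe'.comp (X - h') :=
          hsub.trans (dvd_comp_sub_comp qe' (X - h) (X - h'))
        have := dvd_add h1 hdvde'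
        simpa using this
      have hp'g : p' ∣ g.comp (X - h) := by
        have hsub : p' ∣ (X - h) - (X - Polynomial.C r) := by
          have : (X - h) - (X - Polynomial.C r) = -(h - Polynomial.C r) := by ring
          rw [this]
          exact hp'h.neg_right
        have h1 : p' ∣ g.comp (X - h) - g.comp (X - Polynomial.C r) :=
          hsub.trans (dvd_comp_sub_comp g (X - h) (X - Polynomial.C r))
        have h2 : p' ∣ g.comp (X - Polynomial.C r) := hgp' ▸ dvd_refl p'
        have := dvd_add h1 h2
        simpa using this
      have heq : (qe' * g).comp (X - h) = g.comp (X - h) * qe'.comp (X - h) := by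
        rw [Polynomial.mul_comp]; ring
      rw [heq, hm']
      exact mul_dvd_mul hp'g hm'qe
    · -- roots of qh' * (X - C r)
      intro z hz
      rw [Polynomial.map_mul, Polynomial.IsRoot, Polynomial.eval_mul] at hz
      rcases mul_eq_zero.1 hz with h1 | h1
      · exact hrooth' z h1
      · have : z = (r : ℂ) := by
          have : ((X - Polynomial.C r : Polynomial ℝ).map (algebraMap ℝ ℂ)) =
              X - Polynomial.C (r : ℂ) := by simp
          rw [this] at h1
          simp only [Polynomial.eval_sub, Polynomial.eval_X, Polynomial.eval_C] at h1
          exact sub_eq_zero.1 h1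
        rw [this, Complex.ofReal_im]
    · -- roots of qe' * g
      intro z hz
      rw [Polynomial.map_mul, Polynomial.IsRoot, Polynomial.eval_mul] at hz
      rcases mul_eq_zero.1 hz with h1 | h1
      · exact hroote' z h1
      · exact hgroots z h1



lemma commute_aeval {A B : Module.End ℝ V} (h : Commute B A) (p : Polynomial ℝ) :
    Commute B (Polynomial.aeval A p) := by
  induction p using Polynomial.induction_on with
  | C a =>
      simp only [aeval_C]
      exact ((Algebra.commutes a B : Commute (algebraMap ℝ (Module.End ℝ V) a) B)).symm
  | add p q hp hq => simpa [map_add] using hp.add_right hq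
  | monomial n a hn =>
      simp only [map_mul, map_pow, aeval_C, aeval_X]
      exact Commute.mul_right
        ((Algebra.commutes a B : Commute (algebraMap ℝ (Module.End ℝ V) a) B).symm)
        (h.pow_right (n + 1))

lemma comm_poly (A : Module.End ℝ V) (p q : Polynomial ℝ) :
    Commute (Polynomial.aeval A p) (Polynomial.aeval A q) := by
  unfold Commute SemiconjBy
  rw [← map_mul, ← map_mul, mul_comm]

lemma isNilpotent_of_charpoly_roots_zero {T : Module.End ℝ V}
    (h : ∀ z : ℂ, ((T.charpoly).map (algebraMap ℝ ℂ)).IsRoot z → z = 0) :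
    IsNilpotent T := by
  rw [LinearMap.isNilpotent_iff_charpoly]
  apply Polynomial.map_injective (algebraMap ℝ ℂ) (algebraMap ℝ ℂ).injective
  set cp := (T.charpoly).map (algebraMap ℝ ℂ) with hcp
  have hmon : cp.Monic := (LinearMap.charpoly_monic T).map _
  have hsplit : Splits cp := IsAlgClosed.splits cp
  have hprod := hsplit.eq_prod_roots_of_monic hmon
  have hzero : ∀ a ∈ cp.roots, (X : Polynomial ℂ) - Polynomial.C a = X := by
    intro a ha
    rw [h a (Polynomial.isRoot_of_mem_roots ha), map_zero, sub_zero]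
  have hcard : Multiset.card cp.roots = finrank ℝ V := by
    rw [Polynomial.splits_iff_card_roots.1 hsplit, hcp,
      (LinearMap.charpoly_monic T).natDegree_map, LinearMap.charpoly_natDegree]
  rw [hprod, Multiset.map_congr rfl hzero, Multiset.map_const', Multiset.prod_replicate, hcard,
    Polynomial.map_pow, Polynomial.map_X]


end Real
end RJD

open Polynomial Module RJD

/-- Real Jordan decomposition: every endomorphism `A` of a finite-dimensional real vector
space decomposes uniquely as `A = A_n + A_h + A_e` with `A_n` nilpotent, `A_h`
diagonalizable over `ℝ`, `A_e` semisimple with purely imaginary spectrum, all pairwise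
commuting; and `B` commutes with `A` iff it commutes with each component.
Here "diagonalizable over ℝ" is encoded as: semisimple with all complex roots of the
characteristic polynomial real; "semisimple with purely imaginary spectrum" as:
semisimple with all complex roots of the characteristic polynomial purely imaginary. -/
theorem stmt_13 (V : Type*) [AddCommGroup V] [Module ℝ V] [FiniteDimensional ℝ V]
    (A : Module.End ℝ V) :
    ∃ An Ah Ae : Module.End ℝ V,
      (IsNilpotent An ∧
        (Ah.IsSemisimple ∧
          ∀ z : ℂ, z ∈ ((LinearMap.charpoly Ah).map (algebraMap ℝ ℂ)).roots → z.im = 0) ∧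
        (Ae.IsSemisimple ∧
          ∀ z : ℂ, z ∈ ((LinearMap.charpoly Ae).map (algebraMap ℝ ℂ)).roots → z.re = 0) ∧
        A = An + Ah + Ae ∧
        Commute An Ah ∧ Commute An Ae ∧ Commute Ah Ae ∧
        (∀ B : Module.End ℝ V,
          Commute B A ↔ (Commute B An ∧ Commute B Ah ∧ Commute B Ae))) ∧
      ∀ An' Ah' Ae' : Module.End ℝ V,
        (IsNilpotent An' ∧
          (Ah'.IsSemisimple ∧
            ∀ z : ℂ, z ∈ ((LinearMap.charpoly Ah').map (algebraMap ℝ ℂ)).roots → z.im = 0) ∧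
          (Ae'.IsSemisimple ∧
            ∀ z : ℂ, z ∈ ((LinearMap.charpoly Ae').map (algebraMap ℝ ℂ)).roots → z.re = 0) ∧
          A = An' + Ah' + Ae' ∧
          Commute An' Ah' ∧ Commute An' Ae' ∧ Commute Ah' Ae') →
        An' = An ∧ Ah' = Ah ∧ Ae' = Ae := by
  classical
  obtain ⟨N, hNmem, S, hSmem, hN, hS, hA⟩ :=
    Module.End.exists_isNilpotent_isSemisimple (f := A)
  rw [Algebra.adjoin_singleton_eq_range_aeval] at hNmem hSmem
  obtain ⟨pn, hpn⟩ := hNmem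
  obtain ⟨ps, hps⟩ := hSmem
  have hpn : Polynomial.aeval A pn = N := hpn
  have hps : Polynomial.aeval A ps = S := hps
  have hm_sq : Squarefree (minpoly ℝ S) := hS.minpoly_squarefree
  have hm_mon : (minpoly ℝ S).Monic := minpoly.monic (Algebra.IsIntegral.isIntegral S)
  obtain ⟨h, qh, qe, hqh0, hqe0, hdvdh, hdvde, hrh, hre⟩ :=
    exists_splitting (minpoly ℝ S).natDegree (minpoly ℝ S) le_rfl hm_sq hm_mon
  set Ah := Polynomial.aeval S h with hAhdef
  set Ae := S - Ah with hAedef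
  have hAeS : Ae = Polynomial.aeval S (X - Polynomial.C 0 - h) := by
    rw [hAedef, map_sub, map_sub, aeval_X, aeval_C, hAhdef, map_zero, sub_zero]
  have hAeS' : Ae = Polynomial.aeval S (X - h) := by
    rw [hAedef, map_sub, aeval_X, hAhdef]
  have hAhA : Ah = Polynomial.aeval A (h.comp ps) := by rw [aeval_comp, hps]
  have hAeA : Ae = Polynomial.aeval A (ps - h.comp ps) := by
    rw [hAedef, map_sub, ← hAhA, hps]
  have hNA : N = Polynomial.aeval A pn := hpn.symm
  have hSA : S = Polynomial.aeval A ps := hps.symm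
  have hSdvd : ∀ u : Polynomial ℝ, minpoly ℝ S ∣ u → Polynomial.aeval S u = 0 := by
    rintro u ⟨v, rfl⟩
    rw [map_mul, minpoly.aeval, zero_mul]
  have hqhAh : Polynomial.aeval Ah qh = 0 := by
    rw [hAhdef, ← aeval_comp]
    exact hSdvd _ hdvdh
  have hqeAe : Polynomial.aeval Ae qe = 0 := by
    rw [hAeS', ← aeval_comp]
    exact hSdvd _ hdvde
  have hAhss : Ah.IsSemisimple := hS.aeval h
  have hAess : Ae.IsSemisimple := by rw [hAeS']; exact hS.aeval _
  -- single-endomorphism root transfer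
  have charpoly_root_isRoot : ∀ {T : Module.End ℝ V} {q : Polynomial ℝ},
      Polynomial.aeval T q = 0 → ∀ {z : ℂ},
      ((T.charpoly).map (algebraMap ℝ ℂ)).IsRoot z → (q.map (algebraMap ℝ ℂ)).IsRoot z := by
    intro T q hq z hz
    have h0 : Polynomial.aeval (0 : Module.End ℝ V) (X : Polynomial ℝ) = 0 := by simp
    obtain ⟨μ, ν, h1, h2, h3⟩ := charpoly_root_sum_real (Commute.zero_right T) hq h0
      (z := z) (by simpa using hz)
    have hν : ν = 0 := by simpa [Polynomial.IsRoot] using h2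
    rw [h3, hν, add_zero]
    exact h1
  have hrootsAh : ∀ z : ℂ, z ∈ ((LinearMap.charpoly Ah).map (algebraMap ℝ ℂ)).roots →
      z.im = 0 := by
    intro z hz
    exact hrh z (charpoly_root_isRoot hqhAh (Polynomial.isRoot_of_mem_roots hz))
  have hrootsAe : ∀ z : ℂ, z ∈ ((LinearMap.charpoly Ae).map (algebraMap ℝ ℂ)).roots →
      z.re = 0 := by
    intro z hz
    exact hre z (charpoly_root_isRoot hqeAe (Polynomial.isRoot_of_mem_roots hz))
  have hsum : A = N + Ah + Ae := by
    rw [hAedef, hA]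
    abel
  have cNAh : Commute N Ah := by rw [hNA, hAhA]; exact comm_poly A _ _
  have cNAe : Commute N Ae := by rw [hNA, hAeA]; exact comm_poly A _ _
  have cAhAe : Commute Ah Ae := by rw [hAhA, hAeA]; exact comm_poly A _ _
  refine ⟨N, Ah, Ae, ⟨hN, ⟨hAhss, hrootsAh⟩, ⟨hAess, hrootsAe⟩, hsum, cNAh, cNAe, cAhAe, ?_⟩, ?_⟩
  · -- the commutation criterion
    intro B
    constructor
    · intro hBA
      exact ⟨hNA ▸ commute_aeval hBA pn, hAhA ▸ commute_aeval hBA _, hAeA ▸ commute_aeval hBA _⟩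
    · rintro ⟨h1, h2, h3⟩
      rw [hsum]
      exact (h1.add_right h2).add_right h3
  · -- uniqueness
    rintro An' Ah' Ae' ⟨hAn', ⟨hAh'ss, hAh'roots⟩, ⟨hAe'ss, hAe'roots⟩, hsum', c12, c13, c23⟩
    have hc1A : Commute An' A := by
      rw [hsum']; exact ((Commute.refl An').add_right c12).add_right c13
    have hc2A : Commute Ah' A := by
      rw [hsum']; exact (c12.symm.add_right (Commute.refl Ah')).add_right c23
    have hc3A : Commute Ae' A := by
      rw [hsum']; exact (c13.symm.add_right c23.symm).add_right (Commute.refl Ae')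
    set S' := Ah' + Ae' with hS'def
    have hS'ss : S'.IsSemisimple := Module.End.IsSemisimple.add_of_commute c23 hAh'ss hAe'ss
    have hS'A : Commute S' A := hc2A.add_left hc3A
    have hAn'N : Commute An' N := hNA ▸ commute_aeval hc1A pn
    have hS'S : Commute S' S := hSA ▸ commute_aeval hS'A ps
    have hkey : S' - S = N - An' := by
      rw [sub_eq_sub_iff_add_eq_add]
      have h1 : N + S = An' + S' := by rw [← hA, hsum', hS'def]; abel
      rw [h1]; abel
    have hnil : IsNilpotent (N - An') := (hAn'N.symm).isNilpotent_sub hN hAn'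
    have hss : (S' - S).IsSemisimple := Module.End.IsSemisimple.sub_of_commute hS'S hS'ss hS
    have h0 : S' - S = 0 :=
      Module.End.eq_zero_of_isNilpotent_isSemisimple (hkey ▸ hnil) hss
    have hSS' : S' = S := sub_eq_zero.1 h0
    have hAn'eq : An' = N := by
      have h1 : (0 : Module.End ℝ V) = N - An' := h0 ▸ hkey
      exact (sub_eq_zero.1 h1.symm).symm
    set D := Ah' - Ah with hDdef
    have hDAe : D = Ae - Ae' := by
      rw [hDdef, sub_eq_sub_iff_add_eq_add]
      have h1 : Ah + Ae = Ah' + Ae' := by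
        rw [hAedef, ← hS'def, hSS']; abel
      rw [← h1]; abel
    have hCAhAh' : Commute Ah' Ah := hAhA ▸ commute_aeval hc2A _
    have hCAeAe' : Commute Ae' Ae := hAeA ▸ commute_aeval hc3A _
    have hDss : D.IsSemisimple :=
      Module.End.IsSemisimple.sub_of_commute hCAhAh' hAh'ss hAhss
    have hchmapne : ∀ T : Module.End ℝ V,
        (T.charpoly).map (algebraMap ℝ ℂ) ≠ 0 :=
      fun T => ((LinearMap.charpoly_monic T).map (algebraMap ℝ ℂ)).ne_zero
    have hDim : ∀ z : ℂ, ((D.charpoly).map (algebraMap ℝ ℂ)).IsRoot z → z.im = 0 := by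
      intro z hz
      have hcomm : Commute Ah' (-Ah) := hCAhAh'.neg_right
      have hp1 : Polynomial.aeval Ah' (LinearMap.charpoly Ah') = 0 :=
        LinearMap.aeval_self_charpoly _
      have hp2 : Polynomial.aeval (-Ah) (qh.comp (-X)) = 0 := by
        rw [aeval_comp]
        simp only [map_neg, aeval_X, neg_neg]
        exact hqhAh
      have hz' : (((Ah' + -Ah).charpoly).map (algebraMap ℝ ℂ)).IsRoot z := by
        rw [show Ah' + -Ah = D by rw [hDdef]; abel]
        exact hz
      obtain ⟨μ, ν, h1, h2, h3⟩ := charpoly_root_sum_real hcomm hp1 hp2 hz'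
      have hμ : μ.im = 0 :=
        hAh'roots μ (Polynomial.mem_roots'.2 ⟨hchmapne Ah', h1⟩)
      have hν : ν.im = 0 := by
        rw [Polynomial.map_comp, Polynomial.IsRoot, Polynomial.eval_comp] at h2
        have h4 : (qh.map (algebraMap ℝ ℂ)).IsRoot (-ν) := by
          simpa using h2
        have := hrh (-ν) h4
        simpa using this
      rw [h3]
      simp [Complex.add_im, hμ, hν]
    have hDre : ∀ z : ℂ, ((D.charpoly).map (algebraMap ℝ ℂ)).IsRoot z → z.re = 0 := by
      intro z hz
      have hcomm : Commute Ae (-Ae') := hCAeAe'.symm.neg_right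
      have hp2 : Polynomial.aeval (-Ae') ((LinearMap.charpoly Ae').comp (-X)) = 0 := by
        rw [aeval_comp]
        simp only [map_neg, aeval_X, neg_neg]
        exact LinearMap.aeval_self_charpoly _
      have hz' : (((Ae + -Ae').charpoly).map (algebraMap ℝ ℂ)).IsRoot z := by
        rw [show Ae + -Ae' = D by rw [hDAe]; abel]
        exact hz
      obtain ⟨μ, ν, h1, h2, h3⟩ := charpoly_root_sum_real hcomm hqeAe hp2 hz'
      have hμ : μ.re = 0 := hre μ h1
      have hν : ν.re = 0 := by
        rw [Polynomial.map_comp, Polynomial.IsRoot, Polynomial.eval_comp] at h2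
        have h4 : ((LinearMap.charpoly Ae').map (algebraMap ℝ ℂ)).IsRoot (-ν) := by
          simpa using h2
        have := hAe'roots (-ν) (Polynomial.mem_roots'.2 ⟨hchmapne Ae', h4⟩)
        simpa using this
      rw [h3]
      simp [Complex.add_re, hμ, hν]
    have hD0 : D = 0 := by
      refine Module.End.eq_zero_of_isNilpotent_isSemisimple ?_ hDss
      refine isNilpotent_of_charpoly_roots_zero (fun z hz => ?_)
      exact Complex.ext (by simpa using hDre z hz) (by simpa using hDim z hz)
    have hAh'eq : Ah' = Ah := sub_eq_zero.1 (hDdef ▸ hD0)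
    have hAe'eq : Ae' = Ae := by
      have h1 : (0 : Module.End ℝ V) = Ae - Ae' := hD0 ▸ hDAe
      exact (sub_eq_zero.1 h1.symm).symm
    exact ⟨hAn'eq, hAh'eq, hAe'eq⟩
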